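/- Let μ be a Borel probability measure on a metric space (X,d) and α : [0,∞) → [0,∞) nonincreasing. If for all measurable f : X → ℝ ∪ {+∞} bounded from below with μ(f = +∞) < 1/2 one has μ(Q_t f > m(f) + r) ≤ α(√(rt)) for all r, t > 0 (where m(f) = inf{m : μ(f ≤ m) ≥ 1/2} and Q_t f(x) = inf_y{f(y) + d(x,y)²/t}), then for every Borel set A with μ(A) ≥ 1/2 and every r ≥ 0, μ(A_r) ≥ 1 - α(r), where A_r = {x : d(x,A) ≤ r}. -/

import Mathlib

open MeasureTheory Set

/-- The median `m(f) = inf {m ∈ ℝ : μ(f ≤ m) ≥ 1/2}` of an extended-real-valued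
function. -/
noncomputable def med {X : Type*} [MeasurableSpace X] (μ : Measure X) (f : X → EReal) : ℝ :=
  sInf {m : ℝ | (1 : ENNReal) / 2 ≤ μ {x | f x ≤ (m : EReal)}}

/-- The inf-convolution `Q_t f (x) = inf_y (f y + d(x,y)²/t)` for `f : X → ℝ ∪ {+∞}`
encoded with values in `EReal`. -/
noncomputable def infConvE {X : Type*} [MetricSpace X] (t : ℝ) (f : X → EReal) (x : X) :
    EReal :=
  ⨅ y : X, f y + ((dist x y ^ 2 / t : ℝ) : EReal)

/-- if the deviation inequality
`μ(Q_t f > m(f) + r) ≤ α(√(rt))` holds for all measurable `f : X → ℝ ∪ {+∞}` bounded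
from below with `μ(f = +∞) < 1/2`, then `μ` satisfies the concentration inequality
`μ(A_r) ≥ 1 - α(r)` for every Borel set `A` with `μ(A) ≥ 1/2` and every `r ≥ 0`. -/
theorem concentration_of_infConv_deviation {X : Type*} [MetricSpace X] [MeasurableSpace X]
    [OpensMeasurableSpace X] (μ : Measure X) [IsProbabilityMeasure μ]
    (α : ℝ → ℝ) (hα : AntitoneOn α (Ici 0))
    (H : ∀ f : X → EReal, Measurable f → (∃ c : ℝ, ∀ x, (c : EReal) ≤ f x) →
      μ {x | f x = ⊤} < 1 / 2 →
      ∀ r t : ℝ, 0 < r → 0 < t →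
        μ {x | ((med μ f + r : ℝ) : EReal) < infConvE t f x} ≤
          ENNReal.ofReal (α (Real.sqrt (r * t)))) :
    ∀ A : Set X, MeasurableSet A → 1 / 2 ≤ μ A → ∀ r : ℝ, 0 ≤ r →
      1 - ENNReal.ofReal (α r) ≤ μ {x | Metric.infDist x A ≤ r} := by
  intro A hA hμA r hr
  classical
  have hAne : A.Nonempty := by
    rcases A.eq_empty_or_nonempty with h | h
    · rw [h] at hμA; simp at hμA
    · exact h
  -- key lemma
  have key : ∀ s : ℝ, 0 < s → μ {x | s < Metric.infDist x A} ≤ ENNReal.ofReal (α s) := by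
    intro s hs
    set M : ℝ := s ^ 2 + 1 with hM
    have hM0 : (0:ℝ) < M := by positivity
    set f : X → EReal := fun x => if x ∈ A then (0 : EReal) else (M : EReal) with hf
    have hfmeas : Measurable f := Measurable.ite hA measurable_const measurable_const
    have hbdd : ∃ c : ℝ, ∀ x, (c : EReal) ≤ f x := by
      refine ⟨0, fun x => ?_⟩
      by_cases hx : x ∈ A
      · simp [hf, hx]
      · simp only [hf, hx, if_false]
        exact_mod_cast hM0.le
    have htop : μ {x | f x = ⊤} < 1 / 2 := by
      have he : {x | f x = ⊤} = ∅ := by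
        ext x
        simp only [mem_setOf_eq, mem_empty_iff_false, iff_false, hf]
        split <;> simp [EReal.coe_ne_top]
      rw [he, measure_empty]
      simp
    have hmed : med μ f = 0 := by
      have hset : {m : ℝ | (1 : ENNReal) / 2 ≤ μ {x | f x ≤ (m : EReal)}} = Ici 0 := by
        ext m
        simp only [mem_setOf_eq, mem_Ici]
        constructor
        · intro hm
          by_contra hm0
          push_neg at hm0
          have he : {x | f x ≤ (m : EReal)} = ∅ := by
            ext x
            simp only [mem_setOf_eq, mem_empty_iff_false, iff_false, hf]
            split
            · intro hle
              have : (0:ℝ) ≤ m := by exact_mod_cast hle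
              linarith
            · intro hle
              have : M ≤ m := by exact_mod_cast hle
              linarith
          rw [he, measure_empty] at hm
          simp at hm
        · intro hm
          refine le_trans hμA (measure_mono ?_)
          intro x hx
          simp only [mem_setOf_eq, hf, hx, if_true]
          exact_mod_cast hm
      rw [med, hset, csInf_Ici]
    have hH := H f hfmeas hbdd htop (s ^ 2) 1 (by positivity) one_pos
    rw [hmed] at hH
    have hsqrt : Real.sqrt (s ^ 2 * 1) = s := by
      rw [mul_one, Real.sqrt_sq hs.le]
    rw [hsqrt] at hH
    refine le_trans (measure_mono ?_) hH
    intro x hx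
    simp only [mem_setOf_eq] at hx ⊢
    set D := Metric.infDist x A with hD
    have hD0 : 0 ≤ D := Metric.infDist_nonneg
    have hsD : s ^ 2 < D ^ 2 := by
      apply pow_lt_pow_left₀ hx hs.le
      norm_num
    have hc : ((0 + s ^ 2 : ℝ) : EReal) < ((min (D ^ 2) M : ℝ) : EReal) := by
      rw [EReal.coe_lt_coe_iff]
      rw [zero_add]
      exact lt_min hsD (by simp [hM])
    refine lt_of_lt_of_le hc (le_iInf fun y => ?_)
    by_cases hy : y ∈ A
    · have hdy : D ≤ dist x y := Metric.infDist_le_dist_of_mem hy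
      have : (min (D ^ 2) M : ℝ) ≤ dist x y ^ 2 / 1 := by
        rw [div_one]
        exact le_trans (min_le_left _ _) (pow_le_pow_left₀ hD0 hdy 2)
      simp only [hf, hy, if_true, zero_add]
      exact_mod_cast this
    · have : (min (D ^ 2) M : ℝ) ≤ M + dist x y ^ 2 / 1 := by
        rw [div_one]
        nlinarith [sq_nonneg (dist x y), min_le_right (D^2) M]
      simp only [hf, hy, if_false, ← EReal.coe_add]
      exact_mod_cast this
  -- now use key with s = r + 1/(n+1)
  set S : ℕ → Set X := fun n => {x | Metric.infDist x A ≤ r + 1 / (n + 1)} with hS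
  have hSmeas : ∀ n, MeasurableSet (S n) := fun n =>
    measurableSet_le (Metric.continuous_infDist_pt A).measurable measurable_const
  have hSanti : Antitone S := by
    intro n m hnm x hx
    simp only [hS, mem_setOf_eq] at hx ⊢
    have : (1 : ℝ) / (m + 1) ≤ 1 / (n + 1) := by
      apply one_div_le_one_div_of_le
      · positivity
      · exact_mod_cast Nat.succ_le_succ hnm
    linarith
  have hInter : {x | Metric.infDist x A ≤ r} = ⋂ n, S n := by
    ext x
    simp only [mem_iInter, hS, mem_setOf_eq]
    constructor
    · intro h n
      have : (0:ℝ) < 1 / (n + 1) := by positivity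
      linarith
    · intro h
      by_contra hc
      push_neg at hc
      obtain ⟨n, hn⟩ := exists_nat_one_div_lt (sub_pos.mpr hc)
      have := h n
      push_cast at this hn
      linarith
  have hbound : ∀ n, 1 - ENNReal.ofReal (α r) ≤ μ (S n) := by
    intro n
    have hsn : 0 < r + 1 / ((n:ℝ) + 1) := by positivity
    have h1 : μ {x | r + 1 / ((n:ℝ) + 1) < Metric.infDist x A} ≤ ENNReal.ofReal (α r) := by
      refine le_trans (key _ hsn) (ENNReal.ofReal_le_ofReal ?_)
      apply hα hr hsn.le
      have : (0:ℝ) < 1 / ((n:ℝ) + 1) := by positivity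
      linarith
    have hcompl : (S n)ᶜ = {x | r + 1 / ((n:ℝ) + 1) < Metric.infDist x A} := by
      ext x
      simp [hS, not_le]
    have hceq : μ ((S n)ᶜ) = 1 - μ (S n) := prob_compl_eq_one_sub (hSmeas n)
    rw [hcompl] at hceq
    have h2 : 1 - μ (S n) ≤ ENNReal.ofReal (α r) := hceq ▸ h1
    have hfin : μ (S n) ≠ ⊤ := measure_ne_top _ _
    exact tsub_le_iff_right.mpr (by rw [add_comm]; exact tsub_le_iff_right.mp h2)
  rw [hInter, Directed.measure_iInter (fun n => (hSmeas n).nullMeasurableSet)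
    (hSanti.directed_ge) ⟨0, measure_ne_top _ _⟩]
  exact le_iInf hbound
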